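/- Let q ∈ ℂ with q ≠ 0 and q² ≠ 1. For every function f : ℂ → ℂ and every z ∈ ℂ with z ≠ 0 and q^{2k}z² ≠ 1 for k ∈ {−1,0,1}, the operators Y, U, V satisfy the Casimir relations (U(Vf))(z) = f(z) − q⁻¹·(Y(Yf))(z) and (V(Uf))(z) = f(z) − q·(Y(Yf))(z). -/

import Mathlib

noncomputable def Yop (q : ℂ) (f : ℂ → ℂ) (z : ℂ) : ℂ :=
  (f (q * z) - f (q⁻¹ * z)) / (z - z⁻¹)

noncomputable def Uop (q : ℂ) (f : ℂ → ℂ) (z : ℂ) : ℂ :=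
  (z * f (q * z) - z⁻¹ * f (q⁻¹ * z)) / (z - z⁻¹)

noncomputable def Vop (q : ℂ) (f : ℂ → ℂ) (z : ℂ) : ℂ :=
  (z * f (q⁻¹ * z) - z⁻¹ * f (q * z)) / (z - z⁻¹)

/-- Casimir relations `UV = 1 - q⁻¹ Y²` and `VU = 1 - q Y²`, pointwise. -/
theorem ska3_casimir (q : ℂ) (hq : q ≠ 0) (hq2 : q ^ 2 ≠ 1)
    (f : ℂ → ℂ) (z : ℂ) (hz : z ≠ 0)
    (h0 : z ^ 2 ≠ 1) (h1 : q ^ 2 * z ^ 2 ≠ 1) (hm1 : q⁻¹ ^ 2 * z ^ 2 ≠ 1) :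
    Uop q (Vop q f) z = f z - q⁻¹ * Yop q (Yop q f) z ∧
    Vop q (Uop q f) z = f z - q * Yop q (Yop q f) z := by
  have hd0 : z - z⁻¹ ≠ 0 := by
    intro h
    apply h0
    have := sub_eq_zero.mp h
    field_simp at this
    linear_combination this
  have hd1 : q * z - (q * z)⁻¹ ≠ 0 := by
    intro h
    apply h1
    have := sub_eq_zero.mp h
    rw [eq_comm, inv_eq_iff_eq_inv] at this
    field_simp at this ⊢
    linear_combination this
  have hdm1 : q⁻¹ * z - (q⁻¹ * z)⁻¹ ≠ 0 := by
    intro h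
    apply hm1
    have := sub_eq_zero.mp h
    rw [eq_comm, inv_eq_iff_eq_inv] at this
    field_simp at this ⊢
    linear_combination this
  have e1 : q * (q⁻¹ * z) = z := by field_simp
  have e2 : q⁻¹ * (q * z) = z := by field_simp
  have hz2 : z ^ 2 - 1 ≠ 0 := sub_ne_zero.mpr h0
  have hq2z : q ^ 2 * z ^ 2 - 1 ≠ 0 := sub_ne_zero.mpr h1
  have hzq : z ^ 2 - q ^ 2 ≠ 0 := by
    intro h
    apply hm1
    rw [sub_eq_zero] at h
    field_simp
    linear_combination h
  have r0 : z - z⁻¹ = (z ^ 2 - 1) / z := by field_simp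
  have r1 : q * z - (q * z)⁻¹ = (q ^ 2 * z ^ 2 - 1) / (q * z) := by field_simp
  have rm1 : q⁻¹ * z - (q⁻¹ * z)⁻¹ = (z ^ 2 - q ^ 2) / (q * z) := by field_simp
  simp only [Uop, Vop, Yop, e1, e2, r0, r1, rm1]
  have hq2z' : z ^ 2 * q ^ 2 - 1 ≠ 0 := by intro h; apply hq2z; linear_combination h
  constructor <;> (field_simp; ring)
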